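/- Let A ∈ R^{n×r}, B ∈ R^{r×n}, K ⊆ R^n. If σ(ker(A)) ∩ σ(B(Σ(K \ {0}))) = ∅ where Σ(K*) = σ^{-1}(σ(K \ {0})), then for all κ ∈ R^r_{>0}, the map f_κ(x) = A diag(κ) x^B on R^n_{>0} is injective with respect to K (f_κ(x) = f_κ(y) with x − y ∈ K implies x = y). -/
import Mathlib


open Matrix

/-- The generalized monomial map `x ↦ x^B`. -/
noncomputable def monomialMap {r n : ℕ} (B : Matrix (Fin r) (Fin n) ℝ)
    (x : Fin n → ℝ) : Fin r → ℝ :=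
  fun j => ∏ i, x i ^ B j i

lemma sign_sub_of_strictMono {f : ℝ → ℝ} (hf : StrictMono f) (a b : ℝ) :
    Real.sign (f a - f b) = Real.sign (a - b) := by
  rcases lt_trichotomy a b with h | h | h
  · rw [Real.sign_of_neg (sub_neg.2 (hf h)), Real.sign_of_neg (sub_neg.2 h)]
  · simp [h]
  · rw [Real.sign_of_pos (sub_pos.2 (hf h)), Real.sign_of_pos (sub_pos.2 h)]

lemma sign_mul_pos' (c t : ℝ) (hc : 0 < c) : Real.sign (c * t) = Real.sign t := by
  rcases lt_trichotomy t 0 with h | h | h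
  · rw [Real.sign_of_neg h, Real.sign_of_neg (mul_neg_of_pos_of_neg hc h)]
  · simp [h]
  · rw [Real.sign_of_pos h, Real.sign_of_pos (mul_pos hc h)]

lemma sign_log_sub (a b : ℝ) (ha : 0 < a) (hb : 0 < b) :
    Real.sign (Real.log a - Real.log b) = Real.sign (a - b) := by
  rcases lt_trichotomy a b with h | h | h
  · rw [Real.sign_of_neg (sub_neg.2 ((Real.log_lt_log_iff ha hb).2 h)),
      Real.sign_of_neg (sub_neg.2 h)]
  · simp [h]
  · rw [Real.sign_of_pos (sub_pos.2 ((Real.log_lt_log_iff hb ha).2 h)),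
      Real.sign_of_pos (sub_pos.2 h)]

lemma monomialMap_eq_exp {r n : ℕ} (B : Matrix (Fin r) (Fin n) ℝ) (x : Fin n → ℝ)
    (hx : ∀ i, 0 < x i) (j : Fin r) :
    monomialMap B x j = Real.exp (∑ i, B j i * Real.log (x i)) := by
  rw [monomialMap, Real.exp_sum]
  refine Finset.prod_congr rfl fun i _ => ?_
  rw [Real.rpow_def_of_pos (hx i), mul_comm]

/-- Müller–Feliu-type injectivity (one direction): the sign condition
`σ(ker A) ∩ σ(B(Σ(K \ {0}))) = ∅` implies injectivity of
`f_κ(x) = A diag(κ) x^B` with respect to `K`, for all positive `κ`. -/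
theorem injective_of_sign_condition (n r : ℕ) (A : Matrix (Fin n) (Fin r) ℝ)
    (B : Matrix (Fin r) (Fin n) ℝ) (K : Set (Fin n → ℝ))
    (hsig : ¬ ∃ k : Fin r → ℝ, ∃ u : Fin n → ℝ,
      A.mulVec k = 0 ∧
      (∃ w ∈ K, w ≠ 0 ∧ ∀ i, Real.sign (u i) = Real.sign (w i)) ∧
      (∀ j, Real.sign (k j) = Real.sign (B.mulVec u j))) :
    ∀ κ : Fin r → ℝ, (∀ j, 0 < κ j) →
      ∀ x y : Fin n → ℝ, (∀ i, 0 < x i) → (∀ i, 0 < y i) →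
        A.mulVec (fun j => κ j * monomialMap B x j) =
          A.mulVec (fun j => κ j * monomialMap B y j) →
        x - y ∈ K → x = y := by
  intro κ hκ x y hx hy hf hK
  by_contra hne
  apply hsig
  refine ⟨fun j => κ j * (monomialMap B x j - monomialMap B y j),
    fun i => Real.log (x i) - Real.log (y i), ?_, ⟨x - y, hK, sub_ne_zero.2 hne, ?_⟩, ?_⟩
  · have h1 : (fun j => κ j * (monomialMap B x j - monomialMap B y j)) =
      (fun j => κ j * monomialMap B x j) - (fun j => κ j * monomialMap B y j) := by
      funext j; simp [mul_sub]
    rw [h1, Matrix.mulVec_sub, hf, sub_self]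
  · intro i
    simpa using sign_log_sub (x i) (y i) (hx i) (hy i)
  · intro j
    have hmv : B.mulVec (fun i => Real.log (x i) - Real.log (y i)) j =
        (∑ i, B j i * Real.log (x i)) - ∑ i, B j i * Real.log (y i) := by
      simp [Matrix.mulVec, dotProduct, mul_sub, Finset.sum_sub_distrib]
    show Real.sign (κ j * (monomialMap B x j - monomialMap B y j)) = _
    rw [hmv, monomialMap_eq_exp B x hx j, monomialMap_eq_exp B y hy j,
      sign_mul_pos' _ _ (hκ j), sign_sub_of_strictMono Real.exp_strictMono]
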